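/- Let K be a non-discrete Hausdorff topological field, n ≥ 1, and U ⊆ K^n a locally cartesian subset. Then for every x ∈ U and every neighbourhood P of x in U there exists an open cartesian set Q = Q₁ × ⋯ × Qₙ ⊆ K^n (with each Q_i open in K) such that x ∈ U ∩ Q ⊆ P, U ∩ Q is relatively open in U, and U ∩ Q is cartesian, i.e., U ∩ Q is a product of n subsets of K none of which has an isolated point. -/

import Mathlib

/-- A subset of `K^n` is *cartesian* if it is a product `V₁ × ⋯ × Vₙ` of subsets of `K`
none of which has an isolated point. -/
def IsCartesianSet {K : Type*} [TopologicalSpace K] {n : ℕ} (V : Set (Fin n → K)) : Prop :=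
  ∃ W : Fin n → Set K, V = Set.univ.pi W ∧ ∀ i, Preperfect (W i)

/-- A subset of `K^n` is *locally cartesian* if each of its points has a relatively open
neighbourhood in it which is cartesian. -/
def IsLocallyCartesian {K : Type*} [TopologicalSpace K] {n : ℕ} (U : Set (Fin n → K)) : Prop :=
  ∀ x ∈ U, ∃ V : Set (Fin n → K),
    x ∈ V ∧ V ⊆ U ∧ (∃ O, IsOpen O ∧ V = U ∩ O) ∧ IsCartesianSet V

/-- **Cartesian neighbourhoods cut out by open cartesian boxes** (1.3 `nicernbhd`).
If `K` is a non-discrete Hausdorff topological field and `U ⊆ K^n` is locally cartesian,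
then for every `x ∈ U` and every neighbourhood `P` of `x` in `U` there is an open
cartesian box `Q = Q₁ × ⋯ × Qₙ` with `x ∈ U ∩ Q ⊆ P` such that `U ∩ Q` is a relatively
open cartesian subset of `U`. -/
theorem exists_open_box_cartesian_nbhd
    {K : Type*} [Field K] [TopologicalSpace K] [IsTopologicalDivisionRing K] [T2Space K]
    (hK : ¬ DiscreteTopology K)
    (n : ℕ) (hn : 1 ≤ n) (U : Set (Fin n → K)) (hU : IsLocallyCartesian U)
    (x : Fin n → K) (hx : x ∈ U)
    (P : Set (Fin n → K)) (hP : P ∈ nhdsWithin x U) (hPU : P ⊆ U) :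
    ∃ Q : Fin n → Set K, (∀ i, IsOpen (Q i)) ∧
      x ∈ U ∩ Set.univ.pi Q ∧ U ∩ Set.univ.pi Q ⊆ P ∧
      (∃ O, IsOpen O ∧ U ∩ Set.univ.pi Q = U ∩ O) ∧
      IsCartesianSet (U ∩ Set.univ.pi Q) := by

  obtain ⟨V, hxV, hVU, ⟨O, hO, hVO⟩, W, hVW, hW⟩ := hU x hx
  obtain ⟨t, ht, hxt, htP⟩ := mem_nhdsWithin.mp hP
  have hxOt : x ∈ O ∩ t := ⟨(hVO ▸ hxV).2, hxt⟩
  obtain ⟨I, u, hu, hsub⟩ := isOpen_pi_iff.mp (hO.inter ht) x hxOt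
  refine ⟨fun i => if i ∈ I then u i else Set.univ, ?_, ?_, ?_, ?_, ?_⟩
  case _ =>
    intro i
    by_cases hi : i ∈ I <;> simp [hi, (hu i · |>.1)]
  all_goals
    have hQsub : Set.univ.pi (fun i => if i ∈ I then u i else Set.univ) ⊆ O ∩ t := by
      intro y hy
      apply hsub
      intro i hi
      have hi' : i ∈ I := hi
      have := hy i (Set.mem_univ i)
      simpa [hi'] using this
    have hxQ : x ∈ Set.univ.pi (fun i => if i ∈ I then u i else Set.univ) := by
      intro i _
      by_cases hi : i ∈ I <;> simp [hi, (hu i · |>.2)]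
  case _ => exact ⟨hx, hxQ⟩
  case _ =>
    rintro y ⟨hyU, hyQ⟩
    exact htP ⟨(hQsub hyQ).2, hyU⟩
  case _ =>
    refine ⟨Set.univ.pi _, isOpen_set_pi Set.finite_univ ?_, rfl⟩
    intro i _
    by_cases hi : i ∈ I <;> simp [hi, (hu i · |>.1)]
  case _ =>
    refine ⟨fun i => W i ∩ (if i ∈ I then u i else Set.univ), ?_, ?_⟩
    · ext y
      constructor
      · rintro ⟨hyU, hyQ⟩
        have hyV : y ∈ V := hVO ▸ ⟨hyU, (hQsub hyQ).1⟩
        have hyW : y ∈ Set.univ.pi W := hVW ▸ hyV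
        exact fun i _ => ⟨hyW i (Set.mem_univ i), hyQ i (Set.mem_univ i)⟩
      · intro hy
        have hyW : y ∈ Set.univ.pi W := fun i hi => (hy i hi).1
        exact ⟨hVU (hVW ▸ hyW), fun i hi => (hy i hi).2⟩
    · intro i
      dsimp only
      rw [Set.inter_comm]
      by_cases hi : i ∈ I
      · simpa [hi] using (hW i).open_inter (hu i hi).1
      · simpa [hi] using (hW i).open_inter isOpen_univ
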